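/- Let q be an odd prime power. Then for every d with 2 ≤ d ≤ q there exists a Hermitian self-orthogonal MDS code over F_{q^2} with parameters [q^2−1, d−1, q^2−d+1]; consequently there exists a q-ary quantum MDS code with parameters [[q^2−1, q^2−2d+1, d]]. -/

import Mathlib

open Polynomial Finset

private lemma aux_eval {F : Type} [CommRing F] {k : ℕ} (c : Fin k → F) (β : F) :
    (∑ i : Fin k, C (c i) * X ^ (i : ℕ)).eval β = ∑ i : Fin k, c i * β ^ (i : ℕ) := by
  rw [eval_finset_sum]; simp

private lemma aux_coeff {F : Type} [CommRing F] {k : ℕ} (c : Fin k → F) (i₀ : Fin k) :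
    (∑ i : Fin k, C (c i) * X ^ (i : ℕ)).coeff (i₀ : ℕ) = c i₀ := by
  rw [finset_sum_coeff]
  rw [Finset.sum_eq_single i₀]
  · simp
  · intro i _ hne
    rw [coeff_C_mul, coeff_X_pow, if_neg (by simpa [Fin.val_injective.ne_iff] using hne.symm), mul_zero]
  · simp

private lemma aux_deg {F : Type} [CommRing F] {k : ℕ} (hk : 1 ≤ k) (c : Fin k → F) :
    (∑ i : Fin k, C (c i) * X ^ (i : ℕ)).natDegree ≤ k - 1 := by
  refine (natDegree_sum_le _ _).trans ?_
  rw [Finset.fold_max_le]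
  refine ⟨by omega, fun i _ => ?_⟩
  exact (natDegree_C_mul_X_pow_le _ _).trans (by have := i.2; omega)

/-- Let `q` be an odd prime power. For every `d` with `2 ≤ d ≤ q` there exists a
Hermitian self-orthogonal MDS code over `F_{q^2}` with parameters `[q^2-1, d-1, q^2-d+1]`;
consequently (assuming the Hermitian construction, taken as the hypothesis `hherm` turning any
Hermitian self-orthogonal `[n,k,n-k+1]` MDS code into an `[[n, n-2k, k+1]]_q` quantum MDS code,
where `QMDS n k d` denotes the existence of an `[[n,k,d]]_q` quantum MDS code) there exists a
`q`-ary quantum MDS code with parameters `[[q^2-1, q^2-2d+1, d]]`. -/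
theorem quantum_MDS_length_q_sq_sub_one
    (q : ℕ) (hq : IsPrimePow q) (hodd : Odd q)
    (F : Type) [Field F] [Fintype F] [DecidableEq F] (hF : Fintype.card F = q ^ 2)
    (QMDS : ℕ → ℕ → ℕ → Prop)
    (hherm : ∀ (n k : ℕ) (C : Submodule F (Fin n → F)),
      Module.finrank F C = k →
      (∀ x ∈ C, x ≠ 0 → n - k + 1 ≤ hammingNorm x) →
      (∃ x ∈ C, x ≠ 0 ∧ hammingNorm x = n - k + 1) →
      (∀ x ∈ C, ∀ y ∈ C, ∑ i, x i * (y i) ^ q = 0) →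
      QMDS n (n - 2 * k) (k + 1)) :
    ∀ d : ℕ, 2 ≤ d → d ≤ q →
      (∃ C : Submodule F (Fin (q ^ 2 - 1) → F),
        Module.finrank F C = d - 1 ∧
        (∀ x ∈ C, x ≠ 0 → q ^ 2 - d + 1 ≤ hammingNorm x) ∧
        (∃ x ∈ C, x ≠ 0 ∧ hammingNorm x = q ^ 2 - d + 1) ∧
        (∀ x ∈ C, ∀ y ∈ C, ∑ i, x i * (y i) ^ q = 0)) ∧
      QMDS (q ^ 2 - 1) (q ^ 2 - 2 * d + 1) d := by
  intro d hd2 hdq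

  have hq2 := hq.two_le
  have hq3 : 3 ≤ q := by rcases hodd with ⟨r, hr⟩; omega
  obtain ⟨p, e, hp', he, hpe⟩ := hq
  have hpp : p.Prime := Nat.prime_iff.mpr hp'
  haveI := Fact.mk hpp
  -- char
  haveI hcharP : CharP F p := by
    haveI h1 : CharP F (ringChar F) := ringChar.charP F
    have h2 : (ringChar F).Prime := CharP.char_is_prime F (ringChar F)
    obtain ⟨n, hn1, hn⟩ := FiniteField.card F (ringChar F)
    have hcard2 : Fintype.card F = p ^ (e * 2) := by rw [hF, ← hpe, ← pow_mul]
    have hdvd : ringChar F ∣ p ^ (e * 2) := by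
      rw [← hcard2, hn]
      exact dvd_pow_self _ (by positivity)
    have := (Nat.prime_dvd_prime_iff_eq h2 hpp).mp (h2.dvd_of_dvd_pow hdvd)
    rwa [this] at h1
  haveI : ExpChar F p := ExpChar.prime hpp
  obtain ⟨m, hm⟩ := hodd
  have hm1 : 1 ≤ m := by omega
  have hmm1 : 1 ≤ m * (m + 1) := by nlinarith
  have hq2eq : q ^ 2 = 4 * (m * (m + 1)) + 1 := by subst hm; ring
  have hNcard : Fintype.card Fˣ = q ^ 2 - 1 := by rw [Fintype.card_units, hF]
  obtain ⟨γ, hγ⟩ := IsCyclic.exists_generator (α := Fˣ)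
  have horder : orderOf γ = q ^ 2 - 1 := by
    rw [orderOf_eq_card_of_forall_mem_zpowers hγ, Nat.card_eq_fintype_card, hNcard]
  have hdlog : ∀ x : Fˣ, ∃ t : ℕ, γ ^ t = x := by
    intro x
    have hfin : IsOfFinOrder γ := isOfFinOrder_of_finite γ
    exact (Submonoid.mem_powers_iff x γ).mp (hfin.mem_powers_iff_mem_zpowers.mpr (hγ x))
  set g : F := (γ : F) with hgdef
  have hgne : g ≠ 0 := Units.ne_zero γ
  have hgN : g ^ (q ^ 2 - 1) = 1 := by
    have := FiniteField.pow_card_sub_one_eq_one g hgne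
    rwa [hF] at this
  have hvalpow : ∀ t : ℕ, ((γ ^ t : Fˣ) : F) = g ^ t := fun t => Units.val_pow_eq_pow_val γ t
  -- g ^ h' = -1
  have hgh : g ^ (2 * (m * (m + 1))) = -1 := by
    have hsq : g ^ (2 * (m * (m + 1))) * g ^ (2 * (m * (m + 1))) = 1 := by
      rw [← pow_add]
      have : 2 * (m * (m + 1)) + 2 * (m * (m + 1)) = q ^ 2 - 1 := by omega
      rw [this, hgN]
    have hne1 : g ^ (2 * (m * (m + 1))) ≠ 1 := by
      intro hcon
      have hunit : γ ^ (2 * (m * (m + 1))) = 1 := Units.ext (by rw [hvalpow]; simpa using hcon)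
      have hdvd := orderOf_dvd_of_pow_eq_one hunit
      rw [horder] at hdvd
      have := Nat.le_of_dvd (by omega) hdvd
      omega
    exact (mul_self_eq_one_iff.mp hsq).resolve_left hne1
  set a : F := g ^ (m + 2) with hadef
  -- the multiplier is never zero
  have l1 : q * (q - 1) + (q - 1) = q ^ 2 - 1 := by
    have a1 : q * (q - 1) + q = q * q := by rw [← Nat.mul_succ]; congr 1; omega
    have a2 : q ^ 2 = q * q := pow_two q
    omega
  have hu : ∀ α : Fˣ, a * ((α : F)) ^ (q - 1) + a ^ q * ((α : F)) ^ (q * (q - 1)) ≠ 0 := by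
    intro α hzero
    obtain ⟨t, ht⟩ := hdlog α
    rw [← ht] at hzero
    have hX : a * ((γ ^ t : Fˣ) : F) ^ (q - 1) = g ^ ((m + 2) + t * (q - 1)) := by
      rw [hvalpow, hadef, ← pow_mul, ← pow_add]
    have hY : a ^ q * ((γ ^ t : Fˣ) : F) ^ (q * (q - 1)) = g ^ ((m + 2) * q + t * (q * (q - 1))) := by
      rw [hvalpow, hadef, ← pow_mul, ← pow_mul, ← pow_add]
    rw [hX, hY] at hzero
    have h3 : g ^ ((m + 2) + t * (q - 1) + t * (q - 1)) +
        g ^ ((m + 2) * q + t * (q * (q - 1)) + t * (q - 1)) = 0 := by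
      rw [pow_add g ((m + 2) + t * (q - 1)) (t * (q - 1)), pow_add g ((m + 2) * q + t * (q * (q - 1))) (t * (q - 1)), ← add_mul, hzero, zero_mul]
    have harith1 : (m + 2) * q + t * (q * (q - 1)) + t * (q - 1) = (m + 2) * q + t * (q ^ 2 - 1) := by
      rw [add_assoc, ← Nat.mul_add, l1]
    rw [harith1, pow_add g ((m + 2) * q) (t * (q ^ 2 - 1)), pow_mul' g t (q ^ 2 - 1), hgN, one_pow, mul_one] at h3
    have heq : g ^ ((m + 2) + t * (q - 1) + t * (q - 1)) = g ^ (2 * (m * (m + 1)) + (m + 2) * q) := by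
      rw [pow_add g (2 * (m * (m + 1))) ((m + 2) * q), hgh, neg_one_mul]
      exact eq_neg_of_add_eq_zero_left h3
    have hunit : γ ^ ((m + 2) + t * (q - 1) + t * (q - 1)) = γ ^ (2 * (m * (m + 1)) + (m + 2) * q) :=
      Units.ext (by rw [hvalpow, hvalpow]; exact heq)
    have hmod := pow_eq_pow_iff_modEq.mp hunit
    rw [horder] at hmod
    have hdvdN : (4 * m) ∣ (q ^ 2 - 1) := by
      refine ⟨m + 1, ?_⟩
      have : 4 * m * (m + 1) = 4 * (m * (m + 1)) := by ring
      omega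
    have hmod4 := hmod.of_dvd hdvdN
    have hAs : (m + 2) + t * (q - 1) + t * (q - 1) = (m + 2) + t * (4 * m) := by
      have h2m : q - 1 = 2 * m := by omega
      rw [h2m]; ring
    have hmod4' : (m + 2) ≡ (2 * (m * (m + 1)) + (m + 2) * q) [MOD 4 * m] := by
      have hA4 : ((m + 2) + t * (q - 1) + t * (q - 1)) % (4 * m) = (m + 2) % (4 * m) := by
        rw [hAs, Nat.add_mul_mod_self_right]
      show (m + 2) % (4 * m) = _ % (4 * m)
      rw [← hA4]; exact hmod4
    have hle : (m + 2) ≤ 2 * (m * (m + 1)) + (m + 2) * q := by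
      have : (m + 2) * 1 ≤ (m + 2) * q := Nat.mul_le_mul_left _ (by omega)
      omega
    have hdvd2 := (Nat.modEq_iff_dvd' hle).mp hmod4'
    have hBs : 2 * (m * (m + 1)) + (m + 2) * q - (m + 2) = (2 * m) * (2 * m + 3) := by
      have : 2 * (m * (m + 1)) + (m + 2) * q = (m + 2) + (2 * m) * (2 * m + 3) := by subst hm; ring
      omega
    rw [hBs] at hdvd2
    obtain ⟨c, hc⟩ := hdvd2
    have hcc : (2 * m) * (2 * m + 3) = (2 * m) * (2 * c) := by rw [hc]; ring
    have := Nat.eq_of_mul_eq_mul_left (show 0 < 2 * m by omega) hcc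
    omega
  have hFqq : Fintype.card F = q * q := by rw [hF, pow_two]
  -- the multiplier is fixed by x ^ q
  have huq : ∀ α : Fˣ, (a * ((α : F)) ^ (q - 1) + a ^ q * ((α : F)) ^ (q * (q - 1))) ^ q
      = a * ((α : F)) ^ (q - 1) + a ^ q * ((α : F)) ^ (q * (q - 1)) := by
    intro α
    set b : F := (α : F) with hbdef
    have hfrob : (a * b ^ (q - 1) + a ^ q * b ^ (q * (q - 1))) ^ q
        = (a * b ^ (q - 1)) ^ q + (a ^ q * b ^ (q * (q - 1))) ^ q := by
      rw [← hpe]; exact add_pow_char_pow _ _ p e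
    have hXq : (a * b ^ (q - 1)) ^ q = a ^ q * b ^ (q * (q - 1)) := by
      rw [mul_pow, ← pow_mul]; ring_nf
    have hBcard : b ^ (q * q) = b := by rw [← hFqq, FiniteField.pow_card]
    have hAcard : a ^ (q * q) = a := by rw [← hFqq, FiniteField.pow_card]
    have hYq : (a ^ q * b ^ (q * (q - 1))) ^ q = a * b ^ (q - 1) := by
      rw [mul_pow, ← pow_mul a q q, hAcard, ← pow_mul b (q * (q - 1)) q,
        show q * (q - 1) * q = (q * q) * (q - 1) from by ring, pow_mul b (q * q) (q - 1), hBcard]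
    rw [hfrob, hXq, hYq, add_comm]
  -- norm surjectivity onto the values of the multiplier
  have hnormsurj : ∀ α : Fˣ, ∃ v : Fˣ,
      ((v : F)) ^ (q + 1) = a * ((α : F)) ^ (q - 1) + a ^ q * ((α : F)) ^ (q * (q - 1)) := by
    intro α
    set u : F := a * ((α : F)) ^ (q - 1) + a ^ q * ((α : F)) ^ (q * (q - 1)) with hudef
    have hune : u ≠ 0 := hu α
    have hu1 : u ^ (q - 1) = 1 := by
      have h := huq α
      rw [← hudef] at h
      have h2 : u ^ (q - 1) * u = u ^ q := by rw [← pow_succ]; congr 1; omega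
      rw [h] at h2
      calc u ^ (q - 1) = u ^ (q - 1) * u * u⁻¹ := by field_simp
        _ = u * u⁻¹ := by rw [h2]
        _ = 1 := by field_simp
    set U : Fˣ := Units.mk0 u hune with hUdef
    have hUval : (U : F) = u := rfl
    have hU1 : U ^ (q - 1) = 1 := Units.ext (by rw [Units.val_pow_eq_pow_val, hUval, hu1, Units.val_one])
    obtain ⟨t, ht⟩ := hdlog U
    have hγ1 : γ ^ (t * (q - 1)) = 1 := by rw [pow_mul, ht, hU1]
    have hdvd := orderOf_dvd_of_pow_eq_one hγ1
    rw [horder] at hdvd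
    obtain ⟨c, hc⟩ := hdvd
    have hq21 : q ^ 2 - 1 = (q + 1) * (q - 1) := by
      have a1 : (q + 1) * (q - 1) + (q + 1) = (q + 1) * q := by rw [← Nat.mul_succ]; congr 1; omega
      have a2 : (q + 1) * q = q * q + q := by ring
      have a3 : q ^ 2 = q * q := pow_two q
      omega
    have ht' : t = (q + 1) * c := by
      apply Nat.eq_of_mul_eq_mul_right (show 0 < q - 1 by omega)
      rw [hc, hq21]; ring
    refine ⟨γ ^ c, ?_⟩
    rw [Units.val_pow_eq_pow_val, ← pow_mul, ← hvalpow, ← hUval, ← ht, ht']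
    congr 2
    exact Nat.mul_comm c (q + 1)
  -- enumeration of the nonzero elements
  have hqq3 : 3 * q ≤ q * q := Nat.mul_le_mul_right q hq3
  have hq2a : q ^ 2 = q * q := pow_two q
  set ε : Fin (q ^ 2 - 1) ≃ Fˣ := (Fintype.equivFinOfCardEq hNcard).symm with hεdef
  have hεinj : Function.Injective (fun j => ((ε j : Fˣ) : F)) :=
    Units.val_injective.comp ε.injective
  -- multipliers
  have hvchoice : ∀ j : Fin (q ^ 2 - 1), ∃ v : Fˣ,
      ((v : F)) ^ (q + 1) = a * ((ε j : F)) ^ (q - 1) + a ^ q * ((ε j : F)) ^ (q * (q - 1)) :=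
    fun j => hnormsurj (ε j)
  choose vv hvv using hvchoice
  set w : Fin (q ^ 2 - 1) → F := fun j => ((vv j : Fˣ) : F) with hwdef
  have hwne : ∀ j, w j ≠ 0 := fun j => Units.ne_zero _
  -- vanishing power sums
  have hsum0 : ∀ M : ℕ, ¬ ((q ^ 2 - 1) ∣ M) → ∑ j : Fin (q ^ 2 - 1), ((ε j : F)) ^ M = 0 := by
    intro M hM
    rw [Equiv.sum_comp ε (fun α : Fˣ => ((α : F)) ^ M)]
    have := FiniteField.sum_pow_units F M
    rw [hF] at this
    rw [this, if_neg hM]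
  have hdq2 : d ≤ q * q := by omega
  -- the evaluation + multiplier linear map
  set φ : (Fin (d - 1) → F) →ₗ[F] (Fin (q ^ 2 - 1) → F) :=
    { toFun := fun c j => w j * ∑ i : Fin (d - 1), c i * ((ε j : F)) ^ (i : ℕ)
      map_add' := by
        intro c₁ c₂
        funext j
        simp [add_mul, Finset.sum_add_distrib, mul_add]
      map_smul' := by
        intro r c
        funext j
        simp only [Pi.smul_apply, smul_eq_mul, RingHom.id_apply, Finset.mul_sum]
        exact Finset.sum_congr rfl fun i _ => by ring } with hφdef
  have hφapp : ∀ c j, φ c j = w j * ∑ i : Fin (d - 1), c i * ((ε j : F)) ^ (i : ℕ) :=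
    fun c j => rfl
  -- kernel triviality via polynomials
  have hker : ∀ c : Fin (d - 1) → F,
      (∀ j, (∑ i : Fin (d - 1), c i * ((ε j : F)) ^ (i : ℕ)) = 0) → c = 0 := by
    intro c hc0
    set P : F[X] := ∑ i : Fin (d - 1), C (c i) * X ^ (i : ℕ) with hPdef
    have hPz : P = 0 := by
      apply eq_zero_of_natDegree_lt_card_of_eval_eq_zero P
        (f := fun α : Fˣ => ((α : F))) Units.val_injective
      · intro α
        rw [hPdef, aux_eval]
        have := hc0 (ε.symm α)
        simpa using this
      · calc P.natDegree ≤ (d - 1) - 1 := aux_deg (by omega) c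
          _ < Fintype.card Fˣ := by rw [hNcard]; omega
    funext i
    have := aux_coeff c i
    rw [← hPdef, hPz, coeff_zero] at this
    exact this.symm
  have hinj : Function.Injective φ := by
    intro c₁ c₂ hcc
    have hz : φ (c₁ - c₂) = 0 := by rw [map_sub, hcc, sub_self]
    have : c₁ - c₂ = 0 := by
      apply hker
      intro j
      have hj := congrFun hz j
      rw [hφapp] at hj
      rcases mul_eq_zero.mp hj with h | h
      · exact absurd h (hwne j)
      · exact h
    exact sub_eq_zero.mp this
  set Cd : Submodule F (Fin (q ^ 2 - 1) → F) := LinearMap.range φ with hCddef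
  have hrank : Module.finrank F Cd = d - 1 := by
    rw [hCddef, LinearMap.finrank_range_of_inj hinj, Module.finrank_fin_fun]
  have hnormcard : ∀ x : Fin (q ^ 2 - 1) → F,
      hammingNorm x = (Finset.univ.filter (fun j => x j ≠ 0)).card := fun x => rfl
  -- weight lower bound
  have hwtlb : ∀ x ∈ Cd, x ≠ 0 → q ^ 2 - d + 1 ≤ hammingNorm x := by
    intro x hx hxne
    obtain ⟨c, rfl⟩ := hx
    have hcne : c ≠ 0 := by rintro rfl; exact hxne (map_zero φ)
    set P : F[X] := ∑ i : Fin (d - 1), C (c i) * X ^ (i : ℕ) with hPdef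
    have hPne : P ≠ 0 := by
      intro hP0
      apply hcne
      funext i
      have := aux_coeff c i
      rw [← hPdef, hP0, coeff_zero] at this
      exact this.symm
    have hPdeg : P.natDegree ≤ d - 2 := by
      have h := aux_deg (show 1 ≤ d - 1 by omega) c
      rw [← hPdef] at h
      omega
    have hzset : (Finset.univ.filter (fun j : Fin (q ^ 2 - 1) => φ c j = 0)).card ≤ d - 2 := by
      set Z := Finset.univ.filter (fun j : Fin (q ^ 2 - 1) => φ c j = 0) with hZdef
      have hcardeq : Z.card = (Z.image (fun j => ((ε j : F)))).card :=
        (Finset.card_image_of_injective Z hεinj).symm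
      have hsub : Z.image (fun j => ((ε j : F))) ⊆ P.roots.toFinset := by
        intro z hz
        obtain ⟨j, hjZ, rfl⟩ := Finset.mem_image.mp hz
        rw [hZdef, Finset.mem_filter] at hjZ
        have hj0 : (∑ i : Fin (d - 1), c i * ((ε j : F)) ^ (i : ℕ)) = 0 := by
          have hh := hjZ.2
          rw [hφapp] at hh
          rcases mul_eq_zero.mp hh with h | h
          · exact absurd h (hwne j)
          · exact h
        rw [Multiset.mem_toFinset, mem_roots hPne]
        show P.IsRoot _
        rw [IsRoot.def, hPdef, aux_eval]
        exact hj0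
      calc Z.card = _ := hcardeq
        _ ≤ P.roots.toFinset.card := Finset.card_le_card hsub
        _ ≤ Multiset.card P.roots := Multiset.toFinset_card_le _
        _ ≤ P.natDegree := card_roots' P
        _ ≤ d - 2 := hPdeg
    have hsplit := Finset.card_filter_add_card_filter_not
      (s := (Finset.univ : Finset (Fin (q ^ 2 - 1)))) (fun j => φ c j = 0)
    rw [Finset.card_univ, Fintype.card_fin] at hsplit
    have hnn : (Finset.univ.filter (fun j => ¬ (φ c j = 0))).card
        = (Finset.univ.filter (fun j => φ c j ≠ 0)).card := rfl
    rw [hnormcard]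
    omega
  -- exact weight codeword
  have hd2n : d - 2 < q ^ 2 - 1 := by omega
  set B : Finset (Fin (q ^ 2 - 1)) := Finset.univ.filter (fun j => (j : ℕ) < d - 2) with hBdef
  have hBmem : ∀ j, j ∈ B ↔ (j : ℕ) < d - 2 := by
    intro j; rw [hBdef, Finset.mem_filter]; simp
  have hBcard : B.card = d - 2 := by
    have hle' : d - 2 ≤ q ^ 2 - 1 := by omega
    have hBeq : B = Finset.map (Fin.castLEEmb hle') Finset.univ := by
      ext j
      rw [hBmem, Finset.mem_map]
      constructor
      · intro hj
        refine ⟨⟨(j : ℕ), hj⟩, Finset.mem_univ _, ?_⟩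
        ext
        simp [Fin.castLEEmb, Fin.castLE]
      · rintro ⟨i, -, rfl⟩
        have : ((Fin.castLEEmb hle' i : Fin (q ^ 2 - 1)) : ℕ) = (i : ℕ) := by
          simp [Fin.castLEEmb, Fin.castLE]
        rw [this]
        exact i.2
    rw [hBeq, Finset.card_map, Finset.card_univ, Fintype.card_fin]
  set Pw : F[X] := ∏ j ∈ B, (X - C ((ε j : F))) with hPwdef
  have hPwne : ∀ j ∈ B, (X - C ((ε j : F))) ≠ 0 := fun j _ => X_sub_C_ne_zero _
  have hPwdeg : Pw.natDegree = d - 2 := by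
    rw [hPwdef, natDegree_prod _ _ hPwne]
    rw [Finset.sum_congr rfl (fun j _ => natDegree_X_sub_C (x := ((ε j : F))))]
    rw [Finset.sum_const, smul_eq_mul, mul_one, hBcard]
  set c₀ : Fin (d - 1) → F := fun i => Pw.coeff (i : ℕ) with hc₀def
  have hx0 : ∀ j, φ c₀ j = w j * Pw.eval ((ε j : F)) := by
    intro j
    rw [hφapp]
    congr 1
    rw [eval_eq_sum_range' (n := d - 1) (by omega) _]
    exact Fin.sum_univ_eq_sum_range (fun i => Pw.coeff i * ((ε j : F)) ^ i) (d - 1)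
  have hevalzero : ∀ j, Pw.eval ((ε j : F)) = 0 ↔ j ∈ B := by
    intro j
    rw [hPwdef, eval_prod]
    constructor
    · intro h0
      obtain ⟨j', hj', hz⟩ := Finset.prod_eq_zero_iff.mp h0
      simp only [eval_sub, eval_X, eval_C] at hz
      have hzz : ((ε j : F)) = ((ε j' : F)) := sub_eq_zero.mp hz
      have := hεinj hzz
      rw [this]
      exact hj'
    · intro hj
      apply Finset.prod_eq_zero hj
      simp
  have hxne0 : φ c₀ ≠ 0 := by
    intro h0
    have hj₀ : (⟨d - 2, hd2n⟩ : Fin (q ^ 2 - 1)) ∉ B := by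
      rw [hBmem]; simp
    have h1 : φ c₀ ⟨d - 2, hd2n⟩ = 0 := by rw [h0]; rfl
    rw [hx0] at h1
    rcases mul_eq_zero.mp h1 with h | h
    · exact hwne _ h
    · exact hj₀ ((hevalzero _).mp h)
  have hexwt : hammingNorm (φ c₀) = q ^ 2 - d + 1 := by
    have hfilt : Finset.univ.filter (fun j => φ c₀ j ≠ 0) = Bᶜ := by
      ext j
      simp only [Finset.mem_filter, Finset.mem_univ, true_and, Finset.mem_compl]
      rw [hx0]
      constructor
      · intro hne hjB
        exact hne (by rw [(hevalzero j).mpr hjB, mul_zero])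
      · intro hjB
        exact mul_ne_zero (hwne j) (fun h => hjB ((hevalzero j).mp h))
    rw [hnormcard, hfilt, Finset.card_compl, Fintype.card_fin, hBcard]
    omega
  have hex : ∃ x ∈ Cd, x ≠ 0 ∧ hammingNorm x = q ^ 2 - d + 1 :=
    ⟨φ c₀, ⟨c₀, rfl⟩, hxne0, hexwt⟩
  -- Hermitian self-orthogonality
  have hkey : ∀ i i' : ℕ, i ≤ q - 2 → i' ≤ q - 2 →
      ∑ j : Fin (q ^ 2 - 1), (w j) ^ (q + 1) * (((ε j : F)) ^ i * (((ε j : F)) ^ i') ^ q) = 0 := by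
    intro i i' hi hi'
    have hterm : ∀ j : Fin (q ^ 2 - 1), (w j) ^ (q + 1) * (((ε j : F)) ^ i * (((ε j : F)) ^ i') ^ q)
        = a * ((ε j : F)) ^ ((q - 1) + (i + i' * q))
          + a ^ q * ((ε j : F)) ^ (q * (q - 1) + (i + i' * q)) := by
      intro j
      have hwvv : (w j) ^ (q + 1)
          = a * ((ε j : F)) ^ (q - 1) + a ^ q * ((ε j : F)) ^ (q * (q - 1)) := hvv j
      rw [hwvv, ← pow_mul ((ε j : F)) i' q]
      rw [pow_add ((ε j : F)) (q - 1) (i + i' * q), pow_add ((ε j : F)) (q * (q - 1)) (i + i' * q),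
        pow_add ((ε j : F)) i (i' * q)]
      ring
    have h1 : i' * q ≤ (q - 2) * q := Nat.mul_le_mul_right q hi'
    have h2 : (q - 2) * q + 2 * q = q * q := by
      rw [← Nat.add_mul]; congr 1; omega
    have h4 : q * (q - 1) + q = q * q := by
      rw [← Nat.mul_succ]; congr 1; omega
    have hnd1 : ¬ ((q ^ 2 - 1) ∣ ((q - 1) + (i + i' * q))) := by
      intro hdvd
      obtain ⟨cc, hcc⟩ := hdvd
      rcases cc with _ | cc
      · rw [Nat.mul_zero] at hcc; omega
      · have h3 : (q ^ 2 - 1) * 1 ≤ (q ^ 2 - 1) * (cc + 1) := Nat.mul_le_mul_left _ (by omega)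
        rw [mul_one] at h3
        omega
    have hnd2 : ¬ ((q ^ 2 - 1) ∣ (q * (q - 1) + (i + i' * q))) := by
      intro hdvd
      obtain ⟨cc, hcc⟩ := hdvd
      have h5 : i' = 0 ∨ 1 * q ≤ i' * q := by
        rcases Nat.eq_zero_or_pos i' with h | h
        · exact Or.inl h
        · exact Or.inr (Nat.mul_le_mul_right q h)
      rcases cc with _ | _ | cc
      · rw [Nat.mul_zero] at hcc; omega
      · rcases h5 with h5 | h5
        · subst h5; omega
        · omega
      · have h6 : (q ^ 2 - 1) * 2 ≤ (q ^ 2 - 1) * (cc + 2) := Nat.mul_le_mul_left _ (by omega)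
        have hub : q * (q - 1) + (i + i' * q) + 2 * q + 2 ≤ 2 * (q * q) := by omega
        have hv : (q ^ 2 - 1) * (cc + 2) = (q ^ 2 - 1) * (cc + 1 + 1) := by ring_nf
        omega
    rw [Finset.sum_congr rfl (fun j _ => hterm j)]
    rw [Finset.sum_add_distrib, ← Finset.mul_sum, ← Finset.mul_sum]
    rw [hsum0 _ hnd1, hsum0 _ hnd2, mul_zero, mul_zero, add_zero]
  have hherm0 : ∀ x ∈ Cd, ∀ y ∈ Cd, ∑ i, x i * (y i) ^ q = 0 := by
    intro x hx y hy
    obtain ⟨c, rfl⟩ := hx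
    obtain ⟨c', rfl⟩ := hy
    have hfr : ∀ (β : F), (∑ i' : Fin (d - 1), c' i' * β ^ (i' : ℕ)) ^ q
        = ∑ i' : Fin (d - 1), (c' i') ^ q * (β ^ (i' : ℕ)) ^ q := by
      intro β
      rw [← hpe, sum_pow_char_pow]
      exact Finset.sum_congr rfl fun i _ => by rw [mul_pow]
    have hterm2 : ∀ j, φ c j * (φ c' j) ^ q
        = ∑ i : Fin (d - 1), ∑ i' : Fin (d - 1),
            (c i * (c' i') ^ q) *
              ((w j) ^ (q + 1) * (((ε j : F)) ^ (i : ℕ) * (((ε j : F)) ^ (i' : ℕ)) ^ q)) := by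
      intro j
      rw [hφapp, hφapp, mul_pow, hfr ((ε j : F))]
      calc (w j * ∑ i : Fin (d - 1), c i * ((ε j : F)) ^ (i : ℕ)) *
            ((w j) ^ q * ∑ i' : Fin (d - 1), (c' i') ^ q * (((ε j : F)) ^ (i' : ℕ)) ^ q)
          = (w j) ^ (q + 1) * ((∑ i : Fin (d - 1), c i * ((ε j : F)) ^ (i : ℕ)) *
              (∑ i' : Fin (d - 1), (c' i') ^ q * (((ε j : F)) ^ (i' : ℕ)) ^ q)) := by
            ring
        _ = (w j) ^ (q + 1) * (∑ i : Fin (d - 1), ∑ i' : Fin (d - 1),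
              (c i * ((ε j : F)) ^ (i : ℕ)) * ((c' i') ^ q * (((ε j : F)) ^ (i' : ℕ)) ^ q)) := by
            rw [Finset.sum_mul_sum]
        _ = ∑ i : Fin (d - 1), ∑ i' : Fin (d - 1),
              (c i * (c' i') ^ q) *
                ((w j) ^ (q + 1) * (((ε j : F)) ^ (i : ℕ) * (((ε j : F)) ^ (i' : ℕ)) ^ q)) := by
            rw [Finset.mul_sum]
            refine Finset.sum_congr rfl fun i _ => ?_
            rw [Finset.mul_sum]
            exact Finset.sum_congr rfl fun i' _ => by ring
    rw [Finset.sum_congr rfl (fun j _ => hterm2 j), Finset.sum_comm]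
    apply Finset.sum_eq_zero
    intro i _
    rw [Finset.sum_comm]
    apply Finset.sum_eq_zero
    intro i' _
    rw [← Finset.mul_sum]
    rw [hkey (i : ℕ) (i' : ℕ) (by have := i.2; omega) (by have := i'.2; omega), mul_zero]
  -- assembly
  have hwtlb' : ∀ x ∈ Cd, x ≠ 0 → (q ^ 2 - 1) - (d - 1) + 1 ≤ hammingNorm x := by
    intro x hx hne
    have := hwtlb x hx hne
    omega
  have hex' : ∃ x ∈ Cd, x ≠ 0 ∧ hammingNorm x = (q ^ 2 - 1) - (d - 1) + 1 := by
    obtain ⟨x, h1, h2, h3⟩ := hex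
    exact ⟨x, h1, h2, by omega⟩
  refine ⟨⟨Cd, hrank, hwtlb, hex, hherm0⟩, ?_⟩
  have hres := hherm (q ^ 2 - 1) (d - 1) Cd hrank hwtlb' hex' hherm0
  have heq1 : (q ^ 2 - 1) - 2 * (d - 1) = q ^ 2 - 2 * d + 1 := by omega
  have heq2 : (d - 1) + 1 = d := by omega
  rwa [heq1, heq2] at hres
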